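/- If A, B ≥ 0, B − A = γ ∈ [−1, 1], and A + B ≤ 1, then min over α ∈ [−2, 2] of A(e^α − 1) + B(e^{−α} − 1) is at most −γ²/2. -/
import Mathlib


lemma exp_poly_bound {x : ℝ} (hx : |x| ≤ 1) :
    Real.exp x - 1 ≤ x + x ^ 2 / 2 + x ^ 3 / 6 + 3 * x ^ 4 / 32 := by
  have h := Real.exp_bound hx (n := 4) (by norm_num)
  have hsum : ∑ m ∈ Finset.range 4, x ^ m / m.factorial
      = 1 + x + x ^ 2 / 2 + x ^ 3 / 6 := by
    norm_num [Finset.sum_range_succ, Nat.factorial]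
  rw [hsum] at h
  have h2 := (abs_le.1 h).2
  have hx4 : |x| ^ 4 = x ^ 4 := by
    rw [← abs_pow, abs_of_nonneg (by positivity)]
  rw [hx4] at h2
  have hf : ((Nat.factorial 4 : ℕ) : ℝ) = 24 := by norm_num [Nat.factorial]
  rw [hf] at h2
  norm_num at h2 ⊢
  nlinarith [sq_nonneg (x ^ 2)]

/-- If A, B ≥ 0, B − A = γ ∈ [−1,1] and A + B ≤ 1, then some α ∈ [−2,2] makes
A(e^α − 1) + B(e^{−α} − 1) ≤ −γ²/2. -/
theorem stmt_4 (A B γ : ℝ) (hA : 0 ≤ A) (hB : 0 ≤ B) (hγ : B - A = γ)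
    (hγ1 : -1 ≤ γ) (hγ2 : γ ≤ 1) (hAB : A + B ≤ 1) :
    ∃ α ∈ Set.Icc (-2 : ℝ) 2,
      A * (Real.exp α - 1) + B * (Real.exp (-α) - 1) ≤ -γ ^ 2 / 2 := by
  refine ⟨γ, ⟨by linarith, by linarith⟩, ?_⟩
  have habs : |γ| ≤ 1 := abs_le.2 ⟨hγ1, hγ2⟩
  have habs' : |(-γ)| ≤ 1 := by rwa [abs_neg]
  have h1 := exp_poly_bound habs
  have h2 := exp_poly_bound habs'
  have e1 : B * γ - A * γ = γ ^ 2 := by rw [← hγ]; ring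
  have e2 : B * γ ^ 3 - A * γ ^ 3 = γ ^ 4 := by rw [← hγ]; ring
  have e3 : (A + B) * γ ^ 2 ≤ γ ^ 2 := by nlinarith [sq_nonneg γ]
  have e4 : (A + B) * γ ^ 4 ≤ γ ^ 4 := by nlinarith [sq_nonneg (γ ^ 2)]
  nlinarith [mul_le_mul_of_nonneg_left h1 hA, mul_le_mul_of_nonneg_left h2 hB,
    sq_nonneg (γ ^ 2), e1, e2, e3, e4]
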